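/- There exists an offspring distribution ξ on {0,1,2} with E[ξ]=1, Var(ξ)<∞, P(ξ=0)>0, P(ξ=1)>0, and integers n=3, k=1 such that E[W_k(T_n)] > E[W_k(T_{n+1})], where T_n is the Galton–Watson tree with offspring ξ conditioned to have n vertices and W_k counts vertices at distance k from the root. -/
import Mathlib


/-- Rooted ordered (plane) trees in which every vertex has at most two children. -/
inductive BTree where
  | leaf : BTree
  | one  : BTree → BTree
  | two  : BTree → BTree → BTree
deriving DecidableEq

namespace BTree

/-- Number of vertices. -/
def size : BTree → ℕ
  | leaf => 1
  | one t => 1 + size t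
  | two s t => 1 + size s + size t

/-- The Galton–Watson probability of a finite tree: the product over all vertices v
of p_{d(v)}, where d(v) is the outdegree of v. -/
noncomputable def gwProb (p : ℕ → ℝ) : BTree → ℝ
  | leaf => p 0
  | one t => p 1 * gwProb p t
  | two s t => p 2 * gwProb p s * gwProb p t

/-- `W k t` is the number of vertices of `t` at distance `k` from the root (the profile). -/
def W : ℕ → BTree → ℕ
  | 0, _ => 1
  | _+1, leaf => 0
  | k+1, one t => W k t
  | k+1, two s t => W k s + W k t

end BTree

/-- The offspring distribution p₀ = (1-ε)/2, p₁ = ε, p₂ = (1-ε)/2. -/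
noncomputable def offspring (ε : ℝ) : ℕ → ℝ :=
  fun n => if n = 0 then (1 - ε) / 2 else if n = 1 then ε else if n = 2 then (1 - ε) / 2 else 0


namespace BTree

lemma one_le_size (t : BTree) : 1 ≤ size t := by
  cases t <;> simp [size]
  omega

lemma eq_of_size_one {t : BTree} (h : size t = 1) : t = leaf := by
  cases t with
  | leaf => rfl
  | one s => have := one_le_size s; simp [size] at h; omega
  | two s u => have := one_le_size s; have := one_le_size u; simp [size] at h; omega

lemma eq_of_size_two {t : BTree} (h : size t = 2) : t = one leaf := by
  cases t with
  | leaf => simp [size] at h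
  | one s =>
    simp [size] at h
    have hs : s = leaf := eq_of_size_one (by omega)
    subst hs; rfl
  | two s u => have := one_le_size s; have := one_le_size u; simp [size] at h; omega

lemma eq_of_size_three {t : BTree} (h : size t = 3) :
    t = one (one leaf) ∨ t = two leaf leaf := by
  cases t with
  | leaf => simp [size] at h
  | one s =>
    simp [size] at h
    have hs : s = one leaf := eq_of_size_two (by omega)
    subst hs; left; rfl
  | two s u =>
    have h1 := one_le_size s; have h2 := one_le_size u
    simp [size] at h
    have hs : s = leaf := eq_of_size_one (by omega)
    have hu : u = leaf := eq_of_size_one (by omega)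
    subst hs; subst hu; right; rfl

lemma eq_of_size_four {t : BTree} (h : size t = 4) :
    t = one (one (one leaf)) ∨ t = one (two leaf leaf) ∨
    t = two leaf (one leaf) ∨ t = two (one leaf) leaf := by
  cases t with
  | leaf => simp [size] at h
  | one s =>
    simp [size] at h
    rcases eq_of_size_three (t := s) (by omega) with rfl | rfl
    · left; rfl
    · right; left; rfl
  | two s u =>
    have h1 := one_le_size s; have h2 := one_le_size u
    simp [size] at h
    have : (size s = 1 ∧ size u = 2) ∨ (size s = 2 ∧ size u = 1) := by omega
    rcases this with ⟨hs, hu⟩ | ⟨hs, hu⟩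
    · rw [eq_of_size_one hs, eq_of_size_two hu]; right; right; left; rfl
    · rw [eq_of_size_two hs, eq_of_size_one hu]; right; right; right; rfl

lemma tsum_size_three (f : BTree → ℝ) :
    (∑' t : BTree, if size t = 3 then f t else 0)
      = f (one (one leaf)) + f (two leaf leaf) := by
  rw [tsum_eq_sum (s := ({one (one leaf), two leaf leaf} : Finset BTree))]
  · rw [Finset.sum_pair (by decide)]
    simp [size]
  · intro t ht
    split
    · rcases eq_of_size_three (by assumption) with rfl | rfl <;> simp at ht
    · rfl

lemma tsum_size_four (f : BTree → ℝ) :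
    (∑' t : BTree, if size t = 4 then f t else 0)
      = f (one (one (one leaf))) + f (one (two leaf leaf))
        + f (two leaf (one leaf)) + f (two (one leaf) leaf) := by
  rw [tsum_eq_sum (s := ({one (one (one leaf)), one (two leaf leaf),
      two leaf (one leaf), two (one leaf) leaf} : Finset BTree))]
  · rw [show ({one (one (one leaf)), one (two leaf leaf),
      two leaf (one leaf), two (one leaf) leaf} : Finset BTree)
      = insert (one (one (one leaf))) (insert (one (two leaf leaf))
          (insert (two leaf (one leaf)) {two (one leaf) leaf})) from rfl]
    rw [Finset.sum_insert (by decide), Finset.sum_insert (by decide),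
      Finset.sum_insert (by decide), Finset.sum_singleton]
    simp [size]
    ring
  · intro t ht
    split
    · rcases eq_of_size_four (by assumption) with rfl | rfl | rfl | rfl <;> simp at ht
    · rfl

end BTree

open BTree

/-- E[W_k(T_n)]: the expectation of the number of vertices at distance `k` from the root
of the Galton–Watson tree with offspring distribution `p` conditioned to have `n` vertices. -/
noncomputable def condExpW (p : ℕ → ℝ) (n k : ℕ) : ℝ :=
  (∑' t : BTree, if size t = n then gwProb p t * (W k t : ℝ) else 0) /
    (∑' t : BTree, if size t = n then gwProb p t else 0)

/-- There is an offspring distribution on {0,1,2} with mean 1, P(ξ=0)>0, P(ξ=1)>0,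
such that E[W₁(T₃)] > E[W₁(T₄)] for the conditioned Galton–Watson trees. -/
theorem exists_offspring_profile_not_monotone :
    ∃ p : ℕ → ℝ, (∀ j, 0 ≤ p j) ∧ (∀ j, 3 ≤ j → p j = 0) ∧
      p 0 + p 1 + p 2 = 1 ∧ 0 < p 0 ∧ 0 < p 1 ∧
      p 1 + 2 * p 2 = 1 ∧   -- E[ξ] = 1 (criticality; Var(ξ) is finite automatically)
      condExpW p 3 1 > condExpW p 4 1 := by

  refine ⟨offspring (1/4), ?_, ?_, ?_, ?_, ?_, ?_, ?_⟩
  · intro j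
    unfold offspring
    split <;> [norm_num; skip]
    split <;> [norm_num; skip]
    split <;> norm_num
  · intro j hj
    unfold offspring
    rcases j with _ | _ | _ | j <;> simp_all
  · norm_num [offspring]
  · norm_num [offspring]
  · norm_num [offspring]
  · norm_num [offspring]
  · unfold condExpW
    rw [tsum_size_three, tsum_size_three, tsum_size_four, tsum_size_four]
    norm_num [gwProb, offspring, W, size]
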